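/- Let M ≥ 1 be an integer, and let r_1, …, r_M ∈ [0,1] and ω_1, …, ω_M ∈ ℝ be such that ∫₀¹ s(x)·x dx = Σ_{k=1}^{M} ω_k s(r_k) for every polynomial s of degree at most 2M−2. Set θ_l = 2πl/(2M−1) for l = 1, …, 2M−1. Let f : D → ℝ be a finite linear combination f(r,θ) = Σ α_{i,j}^ℓ · \bar{Z}_{i,j}^ℓ(r,θ), the sum running over ℓ ∈ {0,1} and nonnegative integers i, j with i + 2j ≤ M−1 (with ℓ = 1 only when i = 0). Then each coefficient satisfies α_{i,j}^ℓ = Σ_{k=1}^{M} [ \bar{R}_{i,j}(r_k) · ω_k · Σ_{l=1}^{2M−1} (2π/(2M−1)) · f(r_k, θ_l) · S_i^ℓ(θ_l) ]. -/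

import Mathlib

open Finset Real

/-- The two-dimensional radial Zernike polynomial `R_{N,n}`. -/
noncomputable def zernikeR (N n : ℕ) (x : ℝ) : ℝ :=
  x ^ N * ∑ k ∈ Finset.range (n + 1),
    (-1 : ℝ) ^ k * (Nat.choose (n + N) k : ℝ) * (Nat.choose n k : ℝ) *
      x ^ (2 * (n - k)) * (1 - x ^ 2) ^ k

/-- The normalized two-dimensional radial Zernike polynomial `R̄_{N,n}`,
satisfying `∫₀¹ R̄_{N,n}(x)² x dx = 1`. -/
noncomputable def zernikeRbar (N n : ℕ) (x : ℝ) : ℝ :=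
  Real.sqrt (2 * (2 * n + N + 1)) * zernikeR N n x

/-- The angular factor `S_N^ℓ` of the Zernike polynomial `Z_{N,n}^ℓ`. -/
noncomputable def zernikeS (N : ℕ) (ℓ : Fin 2) (θ : ℝ) : ℝ :=
  if N = 0 then 1 / Real.sqrt (2 * Real.pi)
  else if ℓ = 0 then Real.sin (N * θ) / Real.sqrt Real.pi
  else Real.cos (N * θ) / Real.sqrt Real.pi


open Finset Polynomial intervalIntegral


lemma cont_aux (a b : ℕ) : Continuous (fun x : ℝ => x ^ a * (1 - x^2)^b) := by continuity

lemma Kint (b a : ℕ) : ∫ x in (0:ℝ)..1, x ^ (2*a+1) * (1 - x^2)^b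
    = (a.factorial * b.factorial : ℝ) / (2 * (a+b+1).factorial) := by
  induction b generalizing a with
  | zero =>
      simp only [pow_zero, mul_one, integral_pow, Nat.factorial]
      have hpos : (0:ℝ) < (a.factorial : ℝ) := by positivity
      push_cast
      rw [one_pow, zero_pow (by omega)]
      field_simp
      ring
  | succ b ih =>
      have h1 : ∀ x : ℝ, x ^ (2*a+1) * (1-x^2)^(b+1)
          = x ^ (2*a+1) * (1-x^2)^b - x ^ (2*(a+1)+1) * (1-x^2)^b := by
        intro x; ring
      rw [intervalIntegral.integral_congr (fun x _ => h1 x),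
        intervalIntegral.integral_sub ((cont_aux _ _).intervalIntegrable _ _)
          ((cont_aux _ _).intervalIntegrable _ _), ih, ih]
      have e1 : a + (b+1) + 1 = (a + b + 1) + 1 := by ring
      have e2 : (a+1) + b + 1 = (a + b + 1) + 1 := by ring
      rw [e1, e2, Nat.factorial_succ (a+b+1), Nat.factorial_succ b, Nat.factorial_succ a]
      have hpos : (0:ℝ) < (a+b+1).factorial := by positivity
      field_simp
      push_cast
      ring


lemma comb_id (A m n : ℕ) (hA : n ≤ A) :
    ∑ k ∈ Finset.range (n+1), (-1:ℝ)^k * (A.choose k) * ((A+m-k).choose (n-k))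
      = (m.choose n : ℝ) := by
  have h1 : (∑ k ∈ Finset.range (A+1),
      ((-X : ℝ[X]))^k * (1+X)^(A-k) * (A.choose k : ℝ[X])) = 1 := by
    rw [← add_pow]; simp
  have h2 : (∑ k ∈ Finset.range (A+1),
      ((-X : ℝ[X]))^k * (1+X)^(A+m-k) * (A.choose k : ℝ[X])) = (1+X)^m := by
    calc (∑ k ∈ Finset.range (A+1), ((-X : ℝ[X]))^k * (1+X)^(A+m-k) * (A.choose k : ℝ[X]))
        = (∑ k ∈ Finset.range (A+1), ((-X : ℝ[X]))^k * (1+X)^(A-k) * (A.choose k : ℝ[X])) * (1+X)^m := by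
          rw [Finset.sum_mul]
          refine Finset.sum_congr rfl (fun k hk => ?_)
          have hk' : k ≤ A := by simp at hk; omega
          have : A + m - k = (A - k) + m := by omega
          rw [this, pow_add]; ring
      _ = (1+X)^m := by rw [h1, one_mul]
  have h3 := congrArg (fun p : ℝ[X] => p.coeff n) h2
  simp only [finset_sum_coeff] at h3
  rw [coeff_one_add_X_pow] at h3
  have h4 : ∀ k, (((-X : ℝ[X]))^k * (1+X)^(A+m-k) * (A.choose k : ℝ[X])).coeff n
      = if k ≤ n then (-1:ℝ)^k * (A.choose k) * ((A+m-k).choose (n-k)) else 0 := by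
    intro k
    have : ((-X : ℝ[X]))^k * (1+X)^(A+m-k) * (A.choose k : ℝ[X])
        = (Polynomial.C ((-1:ℝ)^k * (A.choose k)) * (1+X)^(A+m-k)) * X^k := by
      rw [neg_pow]
      simp only [map_mul, map_pow, map_neg, map_one, map_natCast, Polynomial.C_eq_natCast]
      ring
    rw [this, coeff_mul_X_pow', coeff_C_mul, coeff_one_add_X_pow]
    try split <;> simp
  simp only [h4] at h3
  rw [Finset.sum_ite, Finset.sum_const_zero, add_zero] at h3
  rw [← h3]
  apply Finset.sum_congr
  · ext k
    simp only [Finset.mem_filter, Finset.mem_range]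
    omega
  · intros; rfl

lemma fact_id (N m n k : ℕ) (hk : k ≤ n) :
    n.choose k * (N+m+n-k).factorial * k.factorial
      = n.factorial * (N+m).factorial * ((N+m+n-k).choose (n-k)) := by
  apply Nat.eq_of_mul_eq_mul_right (Nat.factorial_pos (n-k))
  have h1 : n.choose k * k.factorial * (n-k).factorial = n.factorial :=
    Nat.choose_mul_factorial_mul_factorial hk
  have h2 : (N+m+n-k).choose (n-k) * (n-k).factorial * (N+m).factorial
      = (N+m+n-k).factorial := by
    have := Nat.choose_mul_factorial_mul_factorial
      (show n-k ≤ N+m+n-k by omega)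
    have e : N+m+n-k-(n-k) = N+m := by omega
    rw [e] at this; exact this
  calc n.choose k * (N+m+n-k).factorial * k.factorial * (n-k).factorial
      = (N+m+n-k).factorial * (n.choose k * k.factorial * (n-k).factorial) := by ring
    _ = (N+m+n-k).factorial * n.factorial := by rw [h1]
    _ = n.factorial * ((N+m+n-k).choose (n-k) * (n-k).factorial * (N+m).factorial) := by
        rw [h2]; ring
    _ = n.factorial * (N+m).factorial * (N+m+n-k).choose (n-k) * (n-k).factorial := by ring

noncomputable def Qpoly (N n : ℕ) : Polynomial ℝ :=
  ∑ k ∈ Finset.range (n+1),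
    Polynomial.C ((-1:ℝ)^k * ((n+N).choose k) * (n.choose k)) * X^(n-k) * (1-X)^k

lemma Qpoly_natDegree (N n : ℕ) : (Qpoly N n).natDegree ≤ n := by
  apply Polynomial.natDegree_sum_le_of_forall_le
  intro k hk
  simp only [Finset.mem_range] at hk
  calc (Polynomial.C ((-1:ℝ)^k * ((n+N).choose k) * (n.choose k)) * X^(n-k) * (1-X)^k).natDegree
      ≤ (Polynomial.C ((-1:ℝ)^k * ((n+N).choose k) * (n.choose k)) * X^(n-k)).natDegree
        + ((1-X : ℝ[X])^k).natDegree := Polynomial.natDegree_mul_le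
    _ ≤ n := by
        have h1 : (Polynomial.C ((-1:ℝ)^k * ((n+N).choose k) * (n.choose k)) * X^(n-k)).natDegree
            ≤ n - k := by
          apply (Polynomial.natDegree_C_mul_le _ _).trans
          simp [Polynomial.natDegree_X_pow]
        have h2 : ((1-X : ℝ[X])^k).natDegree ≤ k := by
          apply (Polynomial.natDegree_pow_le).trans
          have : (1-X : ℝ[X]).natDegree ≤ 1 := by
            apply (Polynomial.natDegree_sub_le _ _).trans; simp
          calc k * (1-X : ℝ[X]).natDegree ≤ k * 1 := Nat.mul_le_mul_left k this
            _ = k := Nat.mul_one k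
        omega

lemma Qpoly_coeff_top (N n : ℕ) : (Qpoly N n).coeff n = ((2*n+N).choose n : ℝ) := by
  unfold Qpoly
  rw [Polynomial.finset_sum_coeff]
  have h : ∀ k ∈ Finset.range (n+1),
      (Polynomial.C ((-1:ℝ)^k * ((n+N).choose k) * (n.choose k)) * X^(n-k) * (1-X)^k).coeff n
      = ((n+N).choose k : ℝ) * (n.choose k) := by
    intro k hk
    simp only [Finset.mem_range] at hk
    have hk' : k ≤ n := by omega
    have e1 : (Polynomial.C ((-1:ℝ)^k * ((n+N).choose k) * (n.choose k)) * X^(n-k) * (1-X)^k)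
        = Polynomial.C ((-1:ℝ)^k * ((n+N).choose k) * (n.choose k)) * ((1-X)^k * X^(n-k)) := by
      ring
    rw [e1, Polynomial.coeff_C_mul, Polynomial.coeff_mul_X_pow' _ (n-k) n,
      if_pos (Nat.sub_le n k)]
    have e2 : n - (n - k) = k := by omega
    rw [e2]
    have h3 : ((1-X : ℝ[X])^k).coeff k = (-1)^k := by
      have e0 : (1 - X : ℝ[X]) = -(X - Polynomial.C 1) := by simp
      rw [e0, neg_pow,
        show ((-1 : ℝ[X])^k) = Polynomial.C ((-1:ℝ)^k) by simp,
        Polynomial.coeff_C_mul]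
      have hd := ((monic_X_sub_C (1:ℝ)).pow k).coeff_natDegree
      rw [Polynomial.natDegree_pow, Polynomial.natDegree_X_sub_C, mul_one] at hd
      rw [hd, mul_one]
    rw [h3]
    have hsq : (-1:ℝ)^k * (-1:ℝ)^k = 1 := by
      rw [← pow_add]; exact Even.neg_one_pow ⟨k, rfl⟩
    linear_combination (((n+N).choose k : ℝ) * (n.choose k)) * hsq
  rw [Finset.sum_congr rfl h]
  have := Nat.add_choose_eq (n+N) n n
  rw [Finset.Nat.sum_antidiagonal_eq_sum_range_succ (fun a b => (n+N).choose a * n.choose b) n] at this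
  have e4 : n + N + n = 2*n+N := by omega
  rw [e4] at this
  rw [show ((2*n+N).choose n : ℝ) = ((∑ k ∈ Finset.range (n+1), (n+N).choose k * n.choose (n-k) : ℕ) : ℝ) by rw [← this]]
  push_cast
  apply Finset.sum_congr rfl
  intro k hk
  simp only [Finset.mem_range] at hk
  rw [Nat.choose_symm (by omega : k ≤ n)]

lemma zernikeR_eq (N n : ℕ) (x : ℝ) : zernikeR N n x = x^N * (Qpoly N n).eval (x^2) := by
  unfold zernikeR Qpoly
  rw [Polynomial.eval_finset_sum]
  congr 1
  apply Finset.sum_congr rfl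
  intro k _
  simp [pow_mul]
  try ring

lemma zernikeR_cont (N n : ℕ) : Continuous (zernikeR N n) := by
  have : zernikeR N n = fun x => x^N * (Qpoly N n).eval (x^2) := funext (zernikeR_eq N n)
  rw [this]
  exact (continuous_pow N).mul ((Qpoly N n).continuous.comp (continuous_pow 2))

lemma integral_monomial_R (N n m : ℕ) :
    ∫ x in (0:ℝ)..1, x^(2*m+N) * zernikeR N n x * x
      = (m.choose n : ℝ) * n.factorial * (N+m).factorial / (2*(N+m+n+1).factorial) := by
  have hpt : ∀ x : ℝ, x^(2*m+N) * zernikeR N n x * x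
      = ∑ k ∈ Finset.range (n+1), ((-1:ℝ)^k * ((n+N).choose k) * (n.choose k))
          * (x^(2*(N+m+n-k)+1) * (1-x^2)^k) := by
    intro x
    unfold zernikeR
    rw [Finset.mul_sum, Finset.mul_sum, Finset.sum_mul]
    refine Finset.sum_congr rfl (fun k hk => ?_)
    simp only [Finset.mem_range] at hk
    have hexp : (x:ℝ)^(2*m+N) * x^N * x^(2*(n-k)) * x = x^(2*(N+m+n-k)+1) := by
      rw [← pow_add, ← pow_add, ← pow_succ]
      congr 1
      omega
    calc x^(2*m+N) * (x^N * ((-1:ℝ)^k * ((n+N).choose k) * (n.choose k) * x^(2*(n-k)) * (1-x^2)^k)) * x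
        = ((-1:ℝ)^k * ((n+N).choose k) * (n.choose k)) * ((x^(2*m+N) * x^N * x^(2*(n-k)) * x) * (1-x^2)^k) := by ring
      _ = _ := by rw [hexp]
  rw [intervalIntegral.integral_congr (fun x _ => hpt x),
    intervalIntegral.integral_finset_sum
      (fun k _ => ((cont_aux _ _).const_mul _).intervalIntegrable _ _)]
  simp only [intervalIntegral.integral_const_mul]
  have hKi : ∀ k ∈ Finset.range (n+1),
      ((-1:ℝ)^k * ((n+N).choose k) * (n.choose k))
        * (∫ x in (0:ℝ)..1, x^(2*(N+m+n-k)+1) * (1-x^2)^k)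
      = (n.factorial * (N+m).factorial / (2*((N+m+n+1).factorial:ℝ)))
          * ((-1:ℝ)^k * (((n+N)).choose k) * (((n+N)+m-k).choose (n-k))) := by
    intro k hk
    simp only [Finset.mem_range] at hk
    have hk' : k ≤ n := by omega
    rw [Kint]
    have e1 : N+m+n-k+k+1 = N+m+n+1 := by omega
    rw [e1]
    have e2 : n+N+m-k = N+m+n-k := by omega
    rw [e2]
    have hc := congrArg (Nat.cast : ℕ → ℝ) (fact_id N m n k hk')
    push_cast at hc
    have hF : ((N+m+n+1).factorial:ℝ) ≠ 0 := by positivity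
    field_simp
    linear_combination ((((n+N).choose k : ℕ) : ℝ)) * hc
  rw [Finset.sum_congr rfl hKi, ← Finset.mul_sum, comb_id (n+N) m n (Nat.le_add_right n N)]
  ring

lemma integral_R_mul (N n n' : ℕ) (h : n' ≤ n) :
    ∫ x in (0:ℝ)..1, zernikeR N n x * zernikeR N n' x * x
      = if n' = n then 1/(2*(2*(n:ℝ)+N+1)) else 0 := by
  have hpt : ∀ x : ℝ, zernikeR N n x * zernikeR N n' x * x
      = ∑ m ∈ Finset.range (n'+1), (Qpoly N n').coeff m * (x^(2*m+N) * zernikeR N n x * x) := by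
    intro x
    conv_lhs => rw [zernikeR_eq N n' x,
      Polynomial.eval_eq_sum_range' (Nat.lt_succ_of_le (Qpoly_natDegree N n')) (x^2)]
    rw [Finset.mul_sum, Finset.mul_sum, Finset.sum_mul]
    refine Finset.sum_congr rfl (fun m _ => ?_)
    have : (x^2)^m * x^N = x^(2*m+N) := by rw [← pow_mul, ← pow_add]
    calc zernikeR N n x * (x^N * ((Qpoly N n').coeff m * (x^2)^m)) * x
        = (Qpoly N n').coeff m * (((x^2)^m * x^N) * zernikeR N n x * x) := by ring
      _ = _ := by rw [this]
  rw [intervalIntegral.integral_congr (fun x _ => hpt x),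
    intervalIntegral.integral_finset_sum
      (fun m _ => (Continuous.intervalIntegrable (by
        have := zernikeR_cont N n; fun_prop) _ _))]
  simp only [intervalIntegral.integral_const_mul, integral_monomial_R]
  by_cases hnn : n' = n
  · subst hnn
    rw [if_pos rfl]
    rw [Finset.sum_eq_single_of_mem n' (Finset.self_mem_range_succ n')]
    · rw [Qpoly_coeff_top, Nat.choose_self]
      have key : ((2*n'+N).choose n') * n'.factorial * (n'+N).factorial
          = (2*n'+N).factorial := by
        have := Nat.choose_mul_factorial_mul_factorial (show n' ≤ 2*n'+N by omega)
        rw [show 2*n'+N-n' = n'+N by omega] at this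
        exact this
      have e5 : N+n'+n'+1 = (2*n'+N)+1 := by omega
      rw [e5, Nat.factorial_succ, show N+n' = n'+N from by omega]
      have hc := congrArg (Nat.cast : ℕ → ℝ) key
      push_cast at hc ⊢
      have h1 : (0:ℝ) < (2*n'+N).factorial := by positivity
      have h2 : (0:ℝ) < 2*(n':ℝ)+N+1 := by positivity
      field_simp
      linear_combination hc
    · intro m hm hmn
      have : m < n' := by simp at hm; omega
      rw [Nat.choose_eq_zero_of_lt this]
      simp
  · rw [if_neg hnn]
    apply Finset.sum_eq_zero
    intro m hm
    have : m < n := by simp at hm; omega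
    rw [Nat.choose_eq_zero_of_lt this]
    simp

lemma integral_Rbar_mul_aux (N n n' : ℕ) (h : n' ≤ n) :
    ∫ x in (0:ℝ)..1, zernikeRbar N n x * zernikeRbar N n' x * x = if n' = n then 1 else 0 := by
  have hpt : ∀ x : ℝ, zernikeRbar N n x * zernikeRbar N n' x * x
      = (Real.sqrt (2*(2*(n:ℝ)+N+1)) * Real.sqrt (2*(2*(n':ℝ)+N+1)))
        * (zernikeR N n x * zernikeR N n' x * x) := by
    intro x; unfold zernikeRbar; ring
  rw [intervalIntegral.integral_congr (fun x _ => hpt x),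
    intervalIntegral.integral_const_mul, integral_R_mul N n n' h]
  by_cases hnn : n' = n
  · subst hnn
    rw [if_pos rfl, if_pos rfl, Real.mul_self_sqrt (by positivity)]
    have : (2*(2*(n':ℝ)+N+1)) ≠ 0 := by positivity
    field_simp
  · simp [hnn]

lemma integral_Rbar_mul (N n n' : ℕ) :
    ∫ x in (0:ℝ)..1, zernikeRbar N n x * zernikeRbar N n' x * x = if n = n' then 1 else 0 := by
  rcases le_total n' n with h | h
  · rw [integral_Rbar_mul_aux N n n' h]
    simp [eq_comm]
  · have hpt : ∀ x : ℝ, zernikeRbar N n x * zernikeRbar N n' x * x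
        = zernikeRbar N n' x * zernikeRbar N n x * x := by intro x; ring
    rw [intervalIntegral.integral_congr (fun x _ => hpt x), integral_Rbar_mul_aux N n' n h]


lemma exp_sum (m : ℕ) (hm : 1 ≤ m) (k : ℤ) :
    ∑ l ∈ Finset.Icc 1 m, Complex.exp ((((k : ℝ) * l * (2*Real.pi/m)) : ℝ) * Complex.I)
      = if (m:ℤ) ∣ k then (m:ℂ) else 0 := by
  have hm0 : (m:ℝ) ≠ 0 := by positivity
  have hmC : ((m:ℂ)) ≠ 0 := Nat.cast_ne_zero.mpr (by omega)
  by_cases hdvd : (m:ℤ) ∣ k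
  · rw [if_pos hdvd]
    obtain ⟨t, rfl⟩ := hdvd
    have h1 : ∀ l ∈ Finset.Icc 1 m,
        Complex.exp (((((m*t : ℤ) : ℝ) * l * (2*Real.pi/m)) : ℝ) * Complex.I) = 1 := by
      intro l _
      have e : (Complex.ofReal ((((m*t : ℤ) : ℝ) * l * (2*Real.pi/m)))) * Complex.I
          = ((t * l : ℤ) : ℂ) * (2*Real.pi*Complex.I) := by
        push_cast
        field_simp
      rw [show ((((((m*t : ℤ) : ℝ) * l * (2*Real.pi/m)) : ℝ)) : ℂ) * Complex.I
        = ((t * l : ℤ) : ℂ) * (2*Real.pi*Complex.I) from e, Complex.exp_int_mul_two_pi_mul_I]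
    rw [Finset.sum_congr rfl h1]
    simp [Nat.card_Icc]
  · rw [if_neg hdvd]
    set θ : ℝ := (k : ℝ) * (2*Real.pi/m) with hθ
    set z : ℂ := Complex.exp (θ * Complex.I) with hz
    have hzpow : ∀ l : ℕ, z ^ l = Complex.exp ((((k : ℝ) * l * (2*Real.pi/m)) : ℝ) * Complex.I) := by
      intro l
      rw [hz, ← Complex.exp_nat_mul]
      congr 1
      rw [hθ]
      push_cast
      ring
    have hzm : z ^ m = 1 := by
      rw [hzpow m]
      have e : (Complex.ofReal (((k : ℝ) * m * (2*Real.pi/m)))) * Complex.I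
          = (k : ℂ) * (2*Real.pi*Complex.I) := by
        push_cast
        field_simp
      rw [show (((((k : ℝ) * m * (2*Real.pi/m)) : ℝ)) : ℂ) * Complex.I
        = (k : ℂ) * (2*Real.pi*Complex.I) from e, Complex.exp_int_mul_two_pi_mul_I]
    have hpi : (2*Real.pi) ≠ 0 := by positivity
    have hz1 : z ≠ 1 := by
      intro hcon
      rw [hz, Complex.exp_eq_one_iff] at hcon
      obtain ⟨t, ht⟩ := hcon
      have ht2 : (θ:ℂ) * Complex.I = ((t:ℂ)*(2*(Real.pi:ℂ))) * Complex.I := by rw [ht]; ring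
      have ht' := mul_right_cancel₀ Complex.I_ne_zero ht2
      have htR : θ = (t : ℝ) * (2*Real.pi) := by exact_mod_cast ht'
      rw [hθ] at htR
      have h4 : ((k:ℝ)) * (2*Real.pi) = ((t:ℝ)*m) * (2*Real.pi) := by
        field_simp at htR
        rw [htR]; ring
      have h5 := mul_right_cancel₀ hpi h4
      have h6 : k = t * m := by exact_mod_cast h5
      exact hdvd ⟨t, by rw [h6]; ring⟩
    have hsum : ∑ l ∈ Finset.Icc 1 m, z ^ l = 0 := by
      rw [← Finset.Ico_add_one_right_eq_Icc, Finset.sum_Ico_eq_sum_range]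
      have e7 : ∑ l ∈ Finset.range (m+1-1), z ^ (1+l) = z * ∑ l ∈ Finset.range m, z ^ l := by
        rw [show m+1-1 = m from rfl, Finset.mul_sum]
        exact Finset.sum_congr rfl (fun l _ => by rw [pow_add, pow_one])
      rw [e7, geom_sum_eq hz1, hzm]
      simp
    rw [← hsum]
    exact Finset.sum_congr rfl (fun l _ => (hzpow l).symm)

lemma cos_sum (m : ℕ) (hm : 1 ≤ m) (k : ℤ) :
    ∑ l ∈ Finset.Icc 1 m, Real.cos ((k:ℝ) * l * (2*Real.pi/m))
      = if (m:ℤ) ∣ k then (m:ℝ) else 0 := by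
  have := congrArg Complex.re (exp_sum m hm k)
  rw [Complex.re_sum] at this
  simp only [Complex.exp_ofReal_mul_I_re] at this
  rw [this]
  split <;> simp

lemma sin_sum (m : ℕ) (hm : 1 ≤ m) (k : ℤ) :
    ∑ l ∈ Finset.Icc 1 m, Real.sin ((k:ℝ) * l * (2*Real.pi/m)) = 0 := by
  have := congrArg Complex.im (exp_sum m hm k)
  rw [Complex.im_sum] at this
  simp only [Complex.exp_ofReal_mul_I_im] at this
  rw [this]
  split <;> simp

lemma sin_mul_sin (x y : ℝ) : Real.sin x * Real.sin y
    = (Real.cos (x - y) - Real.cos (x + y))/2 := by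
  rw [Real.cos_sub, Real.cos_add]; ring

lemma cos_mul_cos (x y : ℝ) : Real.cos x * Real.cos y
    = (Real.cos (x - y) + Real.cos (x + y))/2 := by
  rw [Real.cos_sub, Real.cos_add]; ring

lemma cos_mul_sin (x y : ℝ) : Real.cos x * Real.sin y
    = (Real.sin (y + x) + Real.sin (y - x))/2 := by
  rw [Real.sin_sub, Real.sin_add]; ring

lemma sin_mul_cos (x y : ℝ) : Real.sin x * Real.cos y
    = (Real.sin (x + y) + Real.sin (x - y))/2 := by
  rw [Real.sin_sub, Real.sin_add]; ring

lemma ang (M : ℕ) (hM : 1 ≤ M) (i i' : ℕ) (hi : i ≤ M-1) (hi' : i' ≤ M-1)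
    (ℓ ℓ' : Fin 2) (hℓ : i = 0 → ℓ = 1) (hℓ' : i' = 0 → ℓ' = 1) :
    ∑ l ∈ Finset.Icc 1 (2*M-1),
      zernikeS i' ℓ' ((l:ℝ) * (2*Real.pi/((2*M-1:ℕ):ℝ)))
        * zernikeS i ℓ ((l:ℝ) * (2*Real.pi/((2*M-1:ℕ):ℝ)))
      = if i' = i ∧ ℓ' = ℓ then ((2*M-1:ℕ):ℝ)/(2*Real.pi) else 0 := by
  set m : ℕ := 2*M-1 with hmdef
  have hm : 1 ≤ m := by omega
  have sqrtpi : Real.sqrt Real.pi * Real.sqrt Real.pi = Real.pi :=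
    Real.mul_self_sqrt Real.pi_pos.le
  have sqrt2pi : Real.sqrt (2*Real.pi) * Real.sqrt (2*Real.pi) = 2*Real.pi :=
    Real.mul_self_sqrt (by positivity)
  have pi0 : Real.pi ≠ 0 := Real.pi_ne_zero
  have hsub : ∀ a b : ℕ, a ≤ M-1 → b ≤ M-1 → ((m:ℤ) ∣ ((a:ℤ) - (b:ℤ)) ↔ a = b) := by
    intro a b ha hb
    constructor
    · intro hd
      have habs : |((a:ℤ) - (b:ℤ))| < (m:ℤ) := by rw [abs_lt]; omega
      have := Int.eq_zero_of_abs_lt_dvd hd habs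
      omega
    · intro h; subst h; simp
  have hadd : ∀ a b : ℕ, 0 < a → a ≤ M-1 → b ≤ M-1 → ¬ ((m:ℤ) ∣ ((a:ℤ) + (b:ℤ))) := by
    intro a b ha hb hb' hd
    have h1 : (0:ℤ) < (a:ℤ) + (b:ℤ) := by omega
    have := Int.le_of_dvd h1 hd
    omega
  by_cases hi0 : i = 0 <;> by_cases hi0' : i' = 0
  · -- both zero
    rw [hℓ hi0, hℓ' hi0', hi0, hi0', if_pos ⟨rfl, rfl⟩]
    have hterm : ∀ l ∈ Finset.Icc 1 m, zernikeS 0 1 ((l:ℝ) * (2*Real.pi/(m:ℝ)))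
        * zernikeS 0 1 ((l:ℝ) * (2*Real.pi/(m:ℝ))) = 1/(2*Real.pi) := by
      intro l _
      simp only [zernikeS, if_pos rfl, reduceIte]
      rw [div_mul_div_comm, one_mul, sqrt2pi]
    rw [Finset.sum_congr rfl hterm, Finset.sum_const, Nat.card_Icc]
    simp only [nsmul_eq_mul, show m+1-1 = m from rfl]
    ring
  · -- i = 0 (so ℓ = 1), i' ≠ 0 : sum of single trig over full period = 0
    rw [if_neg (fun hcon => hi0' (hcon.1.trans hi0))]
    rw [hℓ hi0, hi0]
    have hone : ¬ ((m:ℤ) ∣ (i':ℤ)) := by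
      intro hd
      have := Int.le_of_dvd (by omega) hd
      omega
    have hterm : ∀ l ∈ Finset.Icc 1 m,
        zernikeS i' ℓ' ((l:ℝ) * (2*Real.pi/(m:ℝ))) * zernikeS 0 1 ((l:ℝ) * (2*Real.pi/(m:ℝ)))
        = (if ℓ' = 0 then Real.sin (((i':ℤ):ℝ) * (l:ℝ) * (2*Real.pi/(m:ℝ)))
            else Real.cos (((i':ℤ):ℝ) * (l:ℝ) * (2*Real.pi/(m:ℝ))))
            * (1/(Real.sqrt Real.pi * Real.sqrt (2*Real.pi))) := by
      intro l _
      simp only [zernikeS, if_pos rfl, if_neg hi0', reduceIte]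
      have harg : (i':ℝ) * ((l:ℝ)*(2*Real.pi/(m:ℝ))) = ((i':ℤ):ℝ) * (l:ℝ) * (2*Real.pi/(m:ℝ)) := by
        push_cast; ring
      split <;> rw [harg] <;> ring
    rw [Finset.sum_congr rfl hterm, ← Finset.sum_mul]
    have hzero : (∑ l ∈ Finset.Icc 1 m,
        (if ℓ' = 0 then Real.sin (((i':ℤ):ℝ) * (l:ℝ) * (2*Real.pi/(m:ℝ)))
          else Real.cos (((i':ℤ):ℝ) * (l:ℝ) * (2*Real.pi/(m:ℝ))))) = 0 := by
      by_cases hl : ℓ' = 0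
      · simp only [hl, if_pos rfl]
        exact sin_sum m hm (i':ℤ)
      · simp only [if_neg hl]
        rw [cos_sum m hm (i':ℤ), if_neg hone]
    rw [hzero, zero_mul]
  · -- i ≠ 0, i' = 0 (so ℓ' = 1)
    rw [if_neg (fun hcon => hi0 (hi0' ▸ hcon.1.symm))]
    rw [hℓ' hi0', hi0']
    have hone : ¬ ((m:ℤ) ∣ (i:ℤ)) := by
      intro hd
      have := Int.le_of_dvd (by omega) hd
      omega
    have hterm : ∀ l ∈ Finset.Icc 1 m,
        zernikeS 0 1 ((l:ℝ) * (2*Real.pi/(m:ℝ))) * zernikeS i ℓ ((l:ℝ) * (2*Real.pi/(m:ℝ)))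
        = (if ℓ = 0 then Real.sin (((i:ℤ):ℝ) * (l:ℝ) * (2*Real.pi/(m:ℝ)))
            else Real.cos (((i:ℤ):ℝ) * (l:ℝ) * (2*Real.pi/(m:ℝ))))
            * (1/(Real.sqrt Real.pi * Real.sqrt (2*Real.pi))) := by
      intro l _
      simp only [zernikeS, if_pos rfl, if_neg hi0, reduceIte]
      have harg : (i:ℝ) * ((l:ℝ)*(2*Real.pi/(m:ℝ))) = ((i:ℤ):ℝ) * (l:ℝ) * (2*Real.pi/(m:ℝ)) := by
        push_cast; ring
      split <;> rw [harg] <;> ring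
    rw [Finset.sum_congr rfl hterm, ← Finset.sum_mul]
    have hzero : (∑ l ∈ Finset.Icc 1 m,
        (if ℓ = 0 then Real.sin (((i:ℤ):ℝ) * (l:ℝ) * (2*Real.pi/(m:ℝ)))
          else Real.cos (((i:ℤ):ℝ) * (l:ℝ) * (2*Real.pi/(m:ℝ))))) = 0 := by
      by_cases hl : ℓ = 0
      · simp only [hl, if_pos rfl]
        exact sin_sum m hm (i:ℤ)
      · simp only [if_neg hl]
        rw [cos_sum m hm (i:ℤ), if_neg hone]
    rw [hzero, zero_mul]
  · -- both nonzero
    have hcos1 : ∑ l ∈ Finset.Icc 1 m, Real.cos (((i':ℝ)-(i:ℝ)) * (l:ℝ) * (2*Real.pi/(m:ℝ)))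
        = if i' = i then (m:ℝ) else 0 := by
      have h := cos_sum m hm ((i':ℤ)-(i:ℤ))
      push_cast at h
      rw [h]
      by_cases h : i' = i
      · rw [if_pos ((hsub i' i hi' hi).mpr h), if_pos h]
      · rw [if_neg (fun hd => h ((hsub i' i hi' hi).mp hd)), if_neg h]
    have hcos2 : ∑ l ∈ Finset.Icc 1 m, Real.cos (((i':ℝ)+(i:ℝ)) * (l:ℝ) * (2*Real.pi/(m:ℝ)))
        = 0 := by
      have h := cos_sum m hm ((i':ℤ)+(i:ℤ))
      push_cast at h
      rw [h, if_neg (hadd i' i (by omega) hi' hi)]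
    have hsin1 : ∑ l ∈ Finset.Icc 1 m, Real.sin (((i':ℝ)-(i:ℝ)) * (l:ℝ) * (2*Real.pi/(m:ℝ)))
        = 0 := by
      have h := sin_sum m hm ((i':ℤ)-(i:ℤ)); push_cast at h; rw [h]
    have hsin2 : ∑ l ∈ Finset.Icc 1 m, Real.sin (((i':ℝ)+(i:ℝ)) * (l:ℝ) * (2*Real.pi/(m:ℝ)))
        = 0 := by
      have h := sin_sum m hm ((i':ℤ)+(i:ℤ)); push_cast at h; rw [h]
    have harg1 : ∀ l : ℕ, (i':ℝ)*((l:ℝ)*(2*Real.pi/(m:ℝ))) - (i:ℝ)*((l:ℝ)*(2*Real.pi/(m:ℝ)))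
        = ((i':ℝ)-(i:ℝ)) * (l:ℝ) * (2*Real.pi/(m:ℝ)) := by intro l; ring
    have harg2 : ∀ l : ℕ, (i':ℝ)*((l:ℝ)*(2*Real.pi/(m:ℝ))) + (i:ℝ)*((l:ℝ)*(2*Real.pi/(m:ℝ)))
        = ((i':ℝ)+(i:ℝ)) * (l:ℝ) * (2*Real.pi/(m:ℝ)) := by intro l; ring
    fin_cases ℓ <;> fin_cases ℓ' <;>
      simp only [Fin.mk_zero, Fin.mk_one]
    · -- ℓ = 0, ℓ' = 0 : sin * sin
      have hterm : ∀ l ∈ Finset.Icc 1 m,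
          zernikeS i' 0 ((l:ℝ) * (2*Real.pi/(m:ℝ))) * zernikeS i 0 ((l:ℝ) * (2*Real.pi/(m:ℝ)))
          = (Real.cos (((i':ℝ)-(i:ℝ)) * (l:ℝ) * (2*Real.pi/(m:ℝ)))
              - Real.cos (((i':ℝ)+(i:ℝ)) * (l:ℝ) * (2*Real.pi/(m:ℝ)))) / (2*Real.pi) := by
        intro l _
        simp only [zernikeS, if_neg hi0, if_neg hi0', reduceIte,
          if_neg (show ¬((1:Fin 2) = (0:Fin 2)) by decide), if_pos (show ((0:Fin 2) = (0:Fin 2))  from rfl)]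
        rw [div_mul_div_comm, sqrtpi, sin_mul_sin, harg1 l, harg2 l]
        ring
      rw [Finset.sum_congr rfl hterm, ← Finset.sum_div, Finset.sum_sub_distrib, hcos1, hcos2]
      by_cases h : i' = i
      · rw [if_pos h, if_pos (⟨h, by first | rfl | trivial⟩ : _ ∧ _)]; ring
      · rw [if_neg h, if_neg (fun hc => h hc.1)]; ring
    · -- ℓ = 0, ℓ' = 1 : cos * sin
      have hterm : ∀ l ∈ Finset.Icc 1 m,
          zernikeS i' 1 ((l:ℝ) * (2*Real.pi/(m:ℝ))) * zernikeS i 0 ((l:ℝ) * (2*Real.pi/(m:ℝ)))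
          = (Real.sin (((i:ℝ)+(i':ℝ)) * (l:ℝ) * (2*Real.pi/(m:ℝ)))
              + Real.sin (((i:ℝ)-(i':ℝ)) * (l:ℝ) * (2*Real.pi/(m:ℝ)))) / (2*Real.pi) := by
        intro l _
        simp only [zernikeS, if_neg hi0, if_neg hi0', reduceIte,
          if_neg (show ¬((1:Fin 2) = (0:Fin 2)) by decide), if_pos (show ((0:Fin 2) = (0:Fin 2))  from rfl)]
        have e1 : (i:ℝ)*((l:ℝ)*(2*Real.pi/(m:ℝ))) + (i':ℝ)*((l:ℝ)*(2*Real.pi/(m:ℝ)))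
            = ((i:ℝ)+(i':ℝ)) * (l:ℝ) * (2*Real.pi/(m:ℝ)) := by ring
        have e2 : (i:ℝ)*((l:ℝ)*(2*Real.pi/(m:ℝ))) - (i':ℝ)*((l:ℝ)*(2*Real.pi/(m:ℝ)))
            = ((i:ℝ)-(i':ℝ)) * (l:ℝ) * (2*Real.pi/(m:ℝ)) := by ring
        rw [div_mul_div_comm, sqrtpi, cos_mul_sin, e1, e2]
        ring
      rw [Finset.sum_congr rfl hterm, ← Finset.sum_div, Finset.sum_add_distrib,
        show ∑ l ∈ Finset.Icc 1 m, Real.sin (((i:ℝ)+(i':ℝ)) * (l:ℝ) * (2*Real.pi/(m:ℝ))) = 0 from by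
          have h := sin_sum m hm ((i:ℤ)+(i':ℤ)); push_cast at h; rw [h],
        show ∑ l ∈ Finset.Icc 1 m, Real.sin (((i:ℝ)-(i':ℝ)) * (l:ℝ) * (2*Real.pi/(m:ℝ))) = 0 from by
          have h := sin_sum m hm ((i:ℤ)-(i':ℤ)); push_cast at h; rw [h]]
      rw [if_neg (fun hc => by first | exact hc.2.elim | exact absurd hc.2 (by decide))]
      ring
    · -- ℓ = 1, ℓ' = 0 : sin * cos
      have hterm : ∀ l ∈ Finset.Icc 1 m,
          zernikeS i' 0 ((l:ℝ) * (2*Real.pi/(m:ℝ))) * zernikeS i 1 ((l:ℝ) * (2*Real.pi/(m:ℝ)))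
          = (Real.sin (((i':ℝ)+(i:ℝ)) * (l:ℝ) * (2*Real.pi/(m:ℝ)))
              + Real.sin (((i':ℝ)-(i:ℝ)) * (l:ℝ) * (2*Real.pi/(m:ℝ)))) / (2*Real.pi) := by
        intro l _
        simp only [zernikeS, if_neg hi0, if_neg hi0', reduceIte,
          if_neg (show ¬((1:Fin 2) = (0:Fin 2)) by decide), if_pos (show ((0:Fin 2) = (0:Fin 2))  from rfl)]
        rw [div_mul_div_comm, sqrtpi, sin_mul_cos, harg1 l, harg2 l]
        ring
      rw [Finset.sum_congr rfl hterm, ← Finset.sum_div, Finset.sum_add_distrib, hsin1, hsin2]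
      rw [if_neg (fun hc => by first | exact hc.2.elim | exact absurd hc.2 (by decide))]
      ring
    · -- ℓ = 1, ℓ' = 1 : cos * cos
      have hterm : ∀ l ∈ Finset.Icc 1 m,
          zernikeS i' 1 ((l:ℝ) * (2*Real.pi/(m:ℝ))) * zernikeS i 1 ((l:ℝ) * (2*Real.pi/(m:ℝ)))
          = (Real.cos (((i':ℝ)-(i:ℝ)) * (l:ℝ) * (2*Real.pi/(m:ℝ)))
              + Real.cos (((i':ℝ)+(i:ℝ)) * (l:ℝ) * (2*Real.pi/(m:ℝ)))) / (2*Real.pi) := by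
        intro l _
        simp only [zernikeS, if_neg hi0, if_neg hi0', reduceIte,
          if_neg (show ¬((1:Fin 2) = (0:Fin 2)) by decide), if_pos (show ((0:Fin 2) = (0:Fin 2))  from rfl)]
        rw [div_mul_div_comm, sqrtpi, cos_mul_cos, harg1 l, harg2 l]
        ring
      rw [Finset.sum_congr rfl hterm, ← Finset.sum_div, Finset.sum_add_distrib, hcos1, hcos2]
      by_cases h : i' = i
      · rw [if_pos h, if_pos (⟨h, by first | rfl | trivial⟩ : _ ∧ _)]; ring
      · rw [if_neg h, if_neg (fun hc => h hc.1)]; ring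

noncomputable def Rpoly (N n : ℕ) : Polynomial ℝ :=
  X^N * ∑ k ∈ Finset.range (n+1),
    Polynomial.C ((-1:ℝ)^k * ((n+N).choose k) * (n.choose k)) * X^(2*(n-k)) * (1-X^2)^k

lemma Rpoly_eval (N n : ℕ) (x : ℝ) : (Rpoly N n).eval x = zernikeR N n x := by
  simp [Rpoly, zernikeR, Polynomial.eval_finset_sum]

lemma Rpoly_natDegree (N n : ℕ) : (Rpoly N n).natDegree ≤ N + 2*n := by
  apply Polynomial.natDegree_mul_le.trans
  have h1 : (X^N : ℝ[X]).natDegree ≤ N := by simp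
  have h2 : (∑ k ∈ Finset.range (n+1),
      Polynomial.C ((-1:ℝ)^k * ((n+N).choose k) * (n.choose k)) * X^(2*(n-k)) * (1-X^2)^k).natDegree
      ≤ 2*n := by
    apply Polynomial.natDegree_sum_le_of_forall_le
    intro k hk
    simp only [Finset.mem_range] at hk
    apply Polynomial.natDegree_mul_le.trans
    have h3 : (Polynomial.C ((-1:ℝ)^k * ((n+N).choose k) * (n.choose k)) * X^(2*(n-k))).natDegree
        ≤ 2*(n-k) := by
      apply (Polynomial.natDegree_C_mul_le _ _).trans
      simp
    have h4 : ((1-X^2 : ℝ[X])^k).natDegree ≤ 2*k := by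
      apply Polynomial.natDegree_pow_le.trans
      have : (1-X^2 : ℝ[X]).natDegree ≤ 2 := by
        apply (Polynomial.natDegree_sub_le _ _).trans
        simp
      calc k * (1-X^2 : ℝ[X]).natDegree ≤ k * 2 := Nat.mul_le_mul_left k this
        _ = 2*k := by ring
    omega
  omega

theorem zernike_interpolation
    (M : ℕ) (hM : 1 ≤ M) (r ω : ℕ → ℝ) (hr : ∀ k < M, r k ∈ Set.Icc (0:ℝ) 1)
    (hquad : ∀ s : Polynomial ℝ, s.natDegree ≤ 2 * M - 2 →
      ∫ x in (0:ℝ)..1, s.eval x * x = ∑ k ∈ Finset.range M, ω k * s.eval (r k))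
    (α : ℕ → ℕ → Fin 2 → ℝ) (f : ℝ → ℝ → ℝ)
    (hf : ∀ ρ θ, f ρ θ =
      ∑ i ∈ Finset.range M, ∑ j ∈ Finset.range M, ∑ ℓ : Fin 2,
        if i + 2 * j ≤ M - 1 ∧ (i = 0 → ℓ = 1) then
          α i j ℓ * zernikeRbar i j ρ * zernikeS i ℓ θ
        else 0)
    (i j : ℕ) (ℓ : Fin 2) (hij : i + 2 * j ≤ M - 1) (hℓ : i = 0 → ℓ = 1) :
    α i j ℓ = ∑ k ∈ Finset.range M, (zernikeRbar i j (r k) * ω k *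
      ∑ l ∈ Finset.Icc 1 (2 * M - 1),
        (2 * Real.pi / (2 * M - 1)) * f (r k) ((l : ℝ) * (2 * Real.pi / (2 * M - 1)))
          * zernikeS i ℓ ((l : ℝ) * (2 * Real.pi / (2 * M - 1)))) := by
  have hcast : ((2*M-1:ℕ):ℝ) = 2*(M:ℝ)-1 := by
    push_cast [Nat.cast_sub (show 1 ≤ 2*M by omega)]
    ring
  have hmne : ((2*M-1:ℕ):ℝ) ≠ 0 := by
    have : (1:ℕ) ≤ 2*M-1 := by omega
    positivity
  have hi_le : i ≤ M - 1 := by omega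
  rw [show (2*Real.pi/(2*(M:ℝ)-1)) = (2*Real.pi/((2*M-1:ℕ):ℝ)) from by rw [hcast]]
  set cR : ℝ := 2*Real.pi/((2*M-1:ℕ):ℝ) with hcR
  -- radial quadrature result
  have hrad : ∀ j' : ℕ, i + 2*j' ≤ M - 1 →
      ∑ k ∈ Finset.range M, ω k * (zernikeRbar i j (r k) * zernikeRbar i j' (r k))
        = if j = j' then 1 else 0 := by
    intro j' hj'
    set s : ℝ[X] := (Polynomial.C (Real.sqrt (2*(2*(j:ℝ)+(i:ℝ)+1))) * Rpoly i j)
      * (Polynomial.C (Real.sqrt (2*(2*(j':ℝ)+(i:ℝ)+1))) * Rpoly i j') with hs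
    have hdeg : s.natDegree ≤ 2*M-2 := by
      rw [hs]
      apply Polynomial.natDegree_mul_le.trans
      have d1 := (Polynomial.natDegree_C_mul_le (Real.sqrt (2*(2*(j:ℝ)+(i:ℝ)+1))) (Rpoly i j)).trans
        (Rpoly_natDegree i j)
      have d2 := (Polynomial.natDegree_C_mul_le (Real.sqrt (2*(2*(j':ℝ)+(i:ℝ)+1))) (Rpoly i j')).trans
        (Rpoly_natDegree i j')
      omega
    have heval : ∀ x : ℝ, s.eval x = zernikeRbar i j x * zernikeRbar i j' x := by
      intro x
      rw [hs]
      simp only [Polynomial.eval_mul, Polynomial.eval_C, Rpoly_eval]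
      unfold zernikeRbar
      push_cast
      ring
    have hq := hquad s hdeg
    have hL : ∫ x in (0:ℝ)..1, s.eval x * x
        = ∫ x in (0:ℝ)..1, zernikeRbar i j x * zernikeRbar i j' x * x :=
      intervalIntegral.integral_congr (fun x _ => by rw [heval x])
    rw [hL, integral_Rbar_mul] at hq
    calc ∑ k ∈ Finset.range M, ω k * (zernikeRbar i j (r k) * zernikeRbar i j' (r k))
        = ∑ k ∈ Finset.range M, ω k * s.eval (r k) :=
          Finset.sum_congr rfl (fun k _ => by rw [heval])
      _ = if j = j' then 1 else 0 := hq.symm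
  -- angular result
  have hang : ∀ i' : ℕ, i' ≤ M-1 → ∀ ℓ' : Fin 2, (i' = 0 → ℓ' = 1) →
      cR * ∑ l ∈ Finset.Icc 1 (2*M-1), zernikeS i' ℓ' ((l:ℝ) * cR) * zernikeS i ℓ ((l:ℝ) * cR)
        = if i' = i ∧ ℓ' = ℓ then 1 else 0 := by
    intro i' hi' ℓ' hℓ'
    rw [hcR, ang M hM i i' hi_le hi' ℓ ℓ' hℓ hℓ']
    split
    · have h2 : (2*(M:ℝ)-1) ≠ 0 := by rw [← hcast]; exact hmne
      field_simp
    · rw [mul_zero]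
  -- Step A: expand f and push sums
  have stepA : ∀ k : ℕ,
      ∑ l ∈ Finset.Icc 1 (2*M-1), cR * f (r k) ((l:ℝ)*cR) * zernikeS i ℓ ((l:ℝ)*cR)
      = ∑ i' ∈ Finset.range M, ∑ j' ∈ Finset.range M, ∑ ℓ' : Fin 2,
          (if i' + 2*j' ≤ M-1 ∧ (i'=0 → ℓ'=1) then α i' j' ℓ' * zernikeRbar i' j' (r k) else 0)
            * (cR * ∑ l ∈ Finset.Icc 1 (2*M-1),
                zernikeS i' ℓ' ((l:ℝ)*cR) * zernikeS i ℓ ((l:ℝ)*cR)) := by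
    intro k
    calc ∑ l ∈ Finset.Icc 1 (2*M-1), cR * f (r k) ((l:ℝ)*cR) * zernikeS i ℓ ((l:ℝ)*cR)
        = ∑ l ∈ Finset.Icc 1 (2*M-1), ∑ i' ∈ Finset.range M, ∑ j' ∈ Finset.range M, ∑ ℓ' : Fin 2,
            cR * (if i' + 2*j' ≤ M-1 ∧ (i'=0 → ℓ'=1) then
              α i' j' ℓ' * zernikeRbar i' j' (r k) * zernikeS i' ℓ' ((l:ℝ)*cR) else 0)
              * zernikeS i ℓ ((l:ℝ)*cR) := by
          refine Finset.sum_congr rfl fun l _ => ?_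
          rw [hf]
          simp only [Finset.mul_sum, Finset.sum_mul]
      _ = ∑ i' ∈ Finset.range M, ∑ j' ∈ Finset.range M, ∑ ℓ' : Fin 2,
            ∑ l ∈ Finset.Icc 1 (2*M-1),
            cR * (if i' + 2*j' ≤ M-1 ∧ (i'=0 → ℓ'=1) then
              α i' j' ℓ' * zernikeRbar i' j' (r k) * zernikeS i' ℓ' ((l:ℝ)*cR) else 0)
              * zernikeS i ℓ ((l:ℝ)*cR) := by
          rw [Finset.sum_comm]
          refine Finset.sum_congr rfl fun i' _ => ?_
          rw [Finset.sum_comm]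
          refine Finset.sum_congr rfl fun j' _ => ?_
          rw [Finset.sum_comm]
      _ = _ := by
          refine Finset.sum_congr rfl fun i' _ => Finset.sum_congr rfl fun j' _ =>
            Finset.sum_congr rfl fun ℓ' _ => ?_
          by_cases hc : i' + 2*j' ≤ M-1 ∧ (i'=0 → ℓ'=1)
          · simp only [if_pos hc]
            rw [Finset.mul_sum, Finset.mul_sum]
            exact Finset.sum_congr rfl fun l _ => by ring
          · simp only [if_neg hc, mul_zero, zero_mul, Finset.sum_const_zero]
  -- Step B: angular orthogonality collapses i' and ℓ'
  have stepB : ∀ k : ℕ,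
      (∑ i' ∈ Finset.range M, ∑ j' ∈ Finset.range M, ∑ ℓ' : Fin 2,
          (if i' + 2*j' ≤ M-1 ∧ (i'=0 → ℓ'=1) then α i' j' ℓ' * zernikeRbar i' j' (r k) else 0)
            * (cR * ∑ l ∈ Finset.Icc 1 (2*M-1),
                zernikeS i' ℓ' ((l:ℝ)*cR) * zernikeS i ℓ ((l:ℝ)*cR)))
      = ∑ j' ∈ Finset.range M,
          (if i + 2*j' ≤ M-1 then α i j' ℓ * zernikeRbar i j' (r k) else 0) := by
    intro k
    have hB1 : ∀ i' ∈ Finset.range M, ∀ j' ∈ Finset.range M, ∀ ℓ' : Fin 2,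
        (if i' + 2*j' ≤ M-1 ∧ (i'=0 → ℓ'=1) then α i' j' ℓ' * zernikeRbar i' j' (r k) else 0)
          * (cR * ∑ l ∈ Finset.Icc 1 (2*M-1),
              zernikeS i' ℓ' ((l:ℝ)*cR) * zernikeS i ℓ ((l:ℝ)*cR))
        = if (i' + 2*j' ≤ M-1 ∧ (i'=0 → ℓ'=1)) ∧ i' = i ∧ ℓ' = ℓ then
            α i' j' ℓ' * zernikeRbar i' j' (r k) else 0 := by
      intro i' _ j' _ ℓ'
      by_cases hc : i' + 2*j' ≤ M-1 ∧ (i'=0 → ℓ'=1)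
      · rw [if_pos hc, hang i' (by omega) ℓ' hc.2]
        by_cases hd : i' = i ∧ ℓ' = ℓ
        · rw [if_pos hd, if_pos ⟨hc, hd⟩, mul_one]
        · rw [if_neg hd, if_neg (fun hcon => hd hcon.2), mul_zero]
      · rw [if_neg hc, if_neg (fun hcon => hc hcon.1), zero_mul]
    calc (∑ i' ∈ Finset.range M, ∑ j' ∈ Finset.range M, ∑ ℓ' : Fin 2,
          (if i' + 2*j' ≤ M-1 ∧ (i'=0 → ℓ'=1) then α i' j' ℓ' * zernikeRbar i' j' (r k) else 0)
            * (cR * ∑ l ∈ Finset.Icc 1 (2*M-1),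
                zernikeS i' ℓ' ((l:ℝ)*cR) * zernikeS i ℓ ((l:ℝ)*cR)))
        = ∑ i' ∈ Finset.range M, ∑ j' ∈ Finset.range M, ∑ ℓ' : Fin 2,
            (if (i' + 2*j' ≤ M-1 ∧ (i'=0 → ℓ'=1)) ∧ i' = i ∧ ℓ' = ℓ then
              α i' j' ℓ' * zernikeRbar i' j' (r k) else 0) := by
          exact Finset.sum_congr rfl fun i' hi' => Finset.sum_congr rfl fun j' hj' =>
            Finset.sum_congr rfl fun ℓ' _ => hB1 i' hi' j' hj' ℓ'
      _ = _ := by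
          rw [Finset.sum_eq_single_of_mem i (Finset.mem_range.mpr (by omega))]
          · refine Finset.sum_congr rfl fun j' _ => ?_
            rw [Finset.sum_eq_single_of_mem ℓ (Finset.mem_univ ℓ)]
            · by_cases hd : i + 2*j' ≤ M-1
              · rw [if_pos ⟨⟨hd, hℓ⟩, rfl, rfl⟩, if_pos hd]
              · rw [if_neg (fun hcon => hd hcon.1.1), if_neg hd]
            · intro ℓ'' _ hne
              rw [if_neg (fun hcon => hne hcon.2.2)]
          · intro i'' _ hne
            apply Finset.sum_eq_zero
            intro j' _
            apply Finset.sum_eq_zero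
            intro ℓ'' _
            rw [if_neg (fun hcon => hne hcon.2.1)]
  -- Put everything together
  calc α i j ℓ
      = ∑ j' ∈ Finset.range M,
          (if i + 2*j' ≤ M-1 then α i j' ℓ * (if j = j' then 1 else 0) else 0) := by
        rw [Finset.sum_eq_single_of_mem j (Finset.mem_range.mpr (by omega))]
        · rw [if_pos hij, if_pos rfl, mul_one]
        · intro j'' _ hne
          by_cases hc : i + 2*j'' ≤ M-1
          · rw [if_pos hc, if_neg (fun hcon => hne hcon.symm), mul_zero]
          · rw [if_neg hc]
    _ = ∑ j' ∈ Finset.range M,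
          (if i + 2*j' ≤ M-1 then
            α i j' ℓ * ∑ k ∈ Finset.range M, ω k * (zernikeRbar i j (r k) * zernikeRbar i j' (r k))
          else 0) := by
        refine Finset.sum_congr rfl fun j' _ => ?_
        by_cases hc : i + 2*j' ≤ M-1
        · rw [if_pos hc, if_pos hc, hrad j' hc]
        · rw [if_neg hc, if_neg hc]
    _ = ∑ j' ∈ Finset.range M, ∑ k ∈ Finset.range M,
          zernikeRbar i j (r k) * ω k *
            (if i + 2*j' ≤ M-1 then α i j' ℓ * zernikeRbar i j' (r k) else 0) := by
        refine Finset.sum_congr rfl fun j' _ => ?_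
        by_cases hc : i + 2*j' ≤ M-1
        · rw [if_pos hc, Finset.mul_sum]
          exact Finset.sum_congr rfl fun k _ => by rw [if_pos hc]; ring
        · rw [if_neg hc]
          symm
          apply Finset.sum_eq_zero
          intro k _
          rw [if_neg hc, mul_zero]
    _ = ∑ k ∈ Finset.range M, (zernikeRbar i j (r k) * ω k *
          ∑ j' ∈ Finset.range M,
            (if i + 2*j' ≤ M-1 then α i j' ℓ * zernikeRbar i j' (r k) else 0)) := by
        rw [Finset.sum_comm]
        exact Finset.sum_congr rfl fun k _ => by rw [Finset.mul_sum]
    _ = ∑ k ∈ Finset.range M, (zernikeRbar i j (r k) * ω k *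
          ∑ l ∈ Finset.Icc 1 (2*M-1), cR * f (r k) ((l:ℝ)*cR) * zernikeS i ℓ ((l:ℝ)*cR)) := by
        refine Finset.sum_congr rfl fun k _ => ?_
        rw [stepA k, stepB k]
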